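/- Let p be a prime, k ≥ 1, and n = p^k. Let R = ℤ/nℤ and R^× its group of units. Let D(R^×) denote the least positive integer ℓ such that every multiset over R^× of cardinality ℓ has a nonempty sub-multiset with product 1, and let I(S_R) denote the least positive integer ℓ such that every multiset over R of cardinality ℓ has a nonempty sub-multiset whose product x satisfies x·x = x. Then I(S_R) = D(R^×) + k − 1. -/

import Mathlib

open Multiset

section Helpers

variable {α : Type*} {M : Type*} [CommMonoid M]

/-- A sub-multiset of any prescribed cardinality exists. -/
lemma aux_exists_sub_card (s : Multiset α) {m : ℕ} (h : m ≤ Multiset.card s) :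
    ∃ t : Multiset α, t ≤ s ∧ Multiset.card t = m := by
  refine ⟨((s.toList.take m : List α) : Multiset α), ?_, ?_⟩
  · have h1 : ((s.toList.take m : List α) : Multiset α) ≤ (s.toList : Multiset α) :=
      Multiset.coe_le.2 (List.take_sublist m s.toList).subperm
    rwa [Multiset.coe_toList] at h1
  · rw [Multiset.coe_card, List.length_take, Multiset.length_toList]
    omega

/-- The defining property of the constants is upward closed. -/
lemma aux_upclosed {P : M → Prop} {a b : ℕ} (hab : a ≤ b)
    (h : ∀ T : Multiset M, Multiset.card T = a →
      ∃ W, W ≤ T ∧ W ≠ 0 ∧ P W.prod) :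
    ∀ T : Multiset M, Multiset.card T = b → ∃ W, W ≤ T ∧ W ≠ 0 ∧ P W.prod := by
  intro T hT
  obtain ⟨t, hts, htc⟩ := aux_exists_sub_card T (m := a) (by omega)
  obtain ⟨W, h1, h2, h3⟩ := h t htc
  exact ⟨W, h1.trans hts, h2, h3⟩

/-- Pigeonhole on prefix products: a multiset of size `|G|` over a finite
commutative group has a nonempty sub-multiset with product 1. -/
lemma aux_davenport_le_card {G : Type*} [CommGroup G] [Fintype G] (T : Multiset G)
    (hT : Fintype.card G ≤ Multiset.card T) :
    ∃ W, W ≤ T ∧ W ≠ 0 ∧ W.prod = 1 := by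
  set l := T.toList with hl
  have hlen : l.length = Multiset.card T := Multiset.length_toList T
  set N := Fintype.card G with hN
  have hninj : ¬ Function.Injective (fun i : Fin (N + 1) => (l.take (i : ℕ)).prod) := by
    intro hinj
    have := Fintype.card_le_of_injective _ hinj
    simp [hN] at this
  rw [Function.not_injective_iff] at hninj
  obtain ⟨i, j, hfe, hne⟩ := hninj
  have key : ∀ (a b : ℕ), a < b → b ≤ l.length →
      (l.take a).prod = (l.take b).prod →
      ∃ W, W ≤ T ∧ W ≠ 0 ∧ W.prod = 1 := by
    intro a b hab hbl he
    refine ⟨(((l.drop a).take (b - a) : List G) : Multiset G), ?_, ?_, ?_⟩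
    · have hsub : List.Sublist ((l.drop a).take (b - a)) l :=
        (List.take_sublist _ _).trans (List.drop_sublist _ _)
      have h1 : (((l.drop a).take (b - a) : List G) : Multiset G) ≤ (l : Multiset G) :=
        Multiset.coe_le.2 hsub.subperm
      rwa [hl, Multiset.coe_toList] at h1
    · rw [Ne, Multiset.coe_eq_zero, ← List.length_eq_zero_iff, List.length_take,
        List.length_drop]
      omega
    · have htk : l.take b = l.take a ++ (l.drop a).take (b - a) := by
        have h2 := List.take_add (l := l) (i := a) (j := b - a)
        rwa [Nat.add_sub_cancel' hab.le] at h2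
      rw [htk, List.prod_append] at he
      rw [Multiset.prod_coe]
      exact left_eq_mul.1 he
  have hij : (i : ℕ) ≠ (j : ℕ) := fun h => hne (Fin.ext h)
  rcases lt_or_gt_of_ne hij with h | h
  · exact key i j h (by have := j.isLt; omega) hfe
  · exact key j i h (by have := i.isLt; omega) hfe.symm

/-- Lift a multiset of units to `Mˣ`. -/
lemma aux_lift_units (s : Multiset M) (h : ∀ x ∈ s, IsUnit x) :
    ∃ V : Multiset Mˣ, V.map Units.val = s := by
  induction s using Multiset.induction_on with
  | empty => exact ⟨0, rfl⟩
  | cons a s ih =>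
    obtain ⟨V, hV⟩ := ih (fun x hx => h x (Multiset.mem_cons_of_mem hx))
    obtain ⟨u, hu⟩ := h a (Multiset.mem_cons_self _ _)
    exact ⟨u ::ₘ V, by simp [hV, hu]⟩

/-- The value of a product of units. -/
lemma aux_val_prod (V : Multiset Mˣ) :
    (V.map Units.val).prod = ((V.prod : Mˣ) : M) := by
  rw [show (Units.val : Mˣ → M) = ⇑(Units.coeHom M) from rfl, Multiset.prod_hom]

/-- If every element of `W` is a multiple of `c`, the product is a multiple
of `c ^ card W`. -/
lemma aux_prod_factor {R : Type*} [CommRing R] (c : R) (W : Multiset R)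
    (h : ∀ x ∈ W, ∃ y, x = c * y) :
    ∃ z, W.prod = c ^ Multiset.card W * z := by
  induction W using Multiset.induction_on with
  | empty => exact ⟨1, by simp⟩
  | cons a s ih =>
    obtain ⟨z, hz⟩ := ih (fun x hx => h x (Multiset.mem_cons_of_mem hx))
    obtain ⟨y, hy⟩ := h a (Multiset.mem_cons_self _ _)
    refine ⟨y * z, ?_⟩
    rw [Multiset.prod_cons, hz, hy, Multiset.card_cons, pow_succ]
    ring

end Helpers

section ZModLemmas

variable {p k : ℕ}

lemma aux_unit_iff (hp : p.Prime) (hk : 1 ≤ k) (x : ZMod (p ^ k)) :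
    IsUnit x ↔ ¬ p ∣ x.val := by
  haveI : NeZero (p ^ k) := ⟨pow_ne_zero k hp.pos.ne'⟩
  conv_lhs => rw [← ZMod.natCast_zmod_val x]
  rw [ZMod.isUnit_iff_coprime, Nat.coprime_pow_right_iff (by omega : 0 < k) x.val p,
    Nat.coprime_comm, hp.coprime_iff_not_dvd]

lemma aux_castHom_eq_zero (hp : p.Prime) (hk : 1 ≤ k) (hd : p ∣ p ^ k)
    (x : ZMod (p ^ k)) :
    ZMod.castHom hd (ZMod p) x = 0 ↔ p ∣ x.val := by
  haveI : NeZero (p ^ k) := ⟨pow_ne_zero k hp.pos.ne'⟩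
  conv_lhs => rw [← ZMod.natCast_zmod_val x]
  rw [map_natCast, ZMod.natCast_eq_zero_iff]

lemma aux_nonunit_p_mul (hp : p.Prime) (hk : 1 ≤ k) {x : ZMod (p ^ k)}
    (hx : ¬ IsUnit x) : ∃ y, x = ((p : ℕ) : ZMod (p ^ k)) * y := by
  haveI : NeZero (p ^ k) := ⟨pow_ne_zero k hp.pos.ne'⟩
  rw [aux_unit_iff hp hk, not_not] at hx
  obtain ⟨c, hc⟩ := hx
  refine ⟨(c : ZMod (p ^ k)), ?_⟩
  rw [← ZMod.natCast_zmod_val x, hc]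
  push_cast
  ring

lemma aux_p_not_unit (hp : p.Prime) (hk : 1 ≤ k) :
    ¬ IsUnit ((p : ℕ) : ZMod (p ^ k)) := by
  rw [ZMod.isUnit_prime_iff_not_dvd hp, not_not]
  exact dvd_pow_self p (by omega)

lemma aux_idem (hp : p.Prime) (hk : 1 ≤ k) {x : ZMod (p ^ k)}
    (h : x * x = x) : x = 0 ∨ x = 1 := by
  haveI : NeZero (p ^ k) := ⟨pow_ne_zero k hp.pos.ne'⟩
  haveI : Fact p.Prime := ⟨hp⟩
  by_cases hu : IsUnit x
  · right
    exact hu.mul_left_cancel (by rw [h, mul_one])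
  · left
    have hd : p ∣ p ^ k := dvd_pow_self p (by omega)
    set φ := ZMod.castHom hd (ZMod p) with hφ
    have hx0 : φ x = 0 := by
      rw [hφ, aux_castHom_eq_zero hp hk hd]
      rw [aux_unit_iff hp hk, not_not] at hu
      exact hu
    have h1u : IsUnit (1 - x) := by
      rw [aux_unit_iff hp hk, ← aux_castHom_eq_zero hp hk hd, ← hφ, map_sub, map_one, hx0,
        sub_zero]
      simp
    have hz : x * (1 - x) = 0 := by
      rw [mul_sub, mul_one, h, sub_self]
    exact (h1u.mul_left_eq_zero).1 hz

lemma aux_pow_p_ne_zero (hp : p.Prime) {j : ℕ} (hj : j < k) :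
    (((p : ℕ) : ZMod (p ^ k))) ^ j ≠ 0 := by
  intro h0
  have h1 : ((p ^ j : ℕ) : ZMod (p ^ k)) = 0 := by push_cast; exact h0
  rw [ZMod.natCast_eq_zero_iff] at h1
  exact absurd ((Nat.pow_dvd_pow_iff_le_right hp.one_lt).1 h1) (by omega)

end ZModLemmas

/-- The Davenport constant of the unit group `(ℤ/nℤ)ˣ`. -/
noncomputable def davenportUnits (n : ℕ) : ℕ :=
  sInf {ℓ : ℕ | 0 < ℓ ∧ ∀ T : Multiset (ZMod n)ˣ, T.card = ℓ →
    ∃ W : Multiset (ZMod n)ˣ, W ≤ T ∧ W ≠ 0 ∧ W.prod = 1}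

/-- The `n`-modular Erdős–Burgess constant. -/
noncomputable def modularErdosBurgess (n : ℕ) : ℕ :=
  sInf {ℓ : ℕ | 0 < ℓ ∧ ∀ T : Multiset (ZMod n), T.card = ℓ →
    ∃ W : Multiset (ZMod n), W ≤ T ∧ W ≠ 0 ∧ W.prod * W.prod = W.prod}

/-- For `n = p^k` a prime power, `I(S_R) = D(Rˣ) + k - 1`. -/
theorem stmt_4 (p : ℕ) (hp : p.Prime) (k : ℕ) (hk : 1 ≤ k) :
    modularErdosBurgess (p ^ k) = davenportUnits (p ^ k) + k - 1 := by
  haveI : NeZero (p ^ k) := ⟨pow_ne_zero k hp.pos.ne'⟩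
  classical
  set Dset : Set ℕ := {ℓ : ℕ | 0 < ℓ ∧ ∀ T : Multiset (ZMod (p ^ k))ˣ, T.card = ℓ →
    ∃ W : Multiset (ZMod (p ^ k))ˣ, W ≤ T ∧ W ≠ 0 ∧ W.prod = 1} with hDset
  set Iset : Set ℕ := {ℓ : ℕ | 0 < ℓ ∧ ∀ T : Multiset (ZMod (p ^ k)), T.card = ℓ →
    ∃ W : Multiset (ZMod (p ^ k)), W ≤ T ∧ W ≠ 0 ∧ W.prod * W.prod = W.prod} with hIset
  have hDeq : davenportUnits (p ^ k) = sInf Dset := rfl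
  have hIeq : modularErdosBurgess (p ^ k) = sInf Iset := rfl
  rw [hDeq, hIeq]
  set D := sInf Dset with hD
  -- the Davenport set is nonempty
  have hcardmem : Fintype.card (ZMod (p ^ k))ˣ ∈ Dset := by
    refine ⟨Fintype.card_pos, fun T hT => aux_davenport_le_card T (le_of_eq hT.symm)⟩
  have hDmem : D ∈ Dset := by
    rw [hD]; exact Nat.sInf_mem ⟨_, hcardmem⟩
  have hD1 : 0 < D := hDmem.1
  -- a multiset of units of size D - 1 with no nonempty 1-product sub-multiset
  have hU : ∃ U : Multiset (ZMod (p ^ k))ˣ, Multiset.card U = D - 1 ∧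
      ∀ W, W ≤ U → W ≠ 0 → W.prod ≠ 1 := by
    rcases Nat.eq_or_lt_of_le hD1 with h1 | h1
    · exact ⟨0, by rw [Multiset.card_zero]; omega,
        fun W hW hW0 => absurd (le_zero.1 hW) hW0⟩
    · have hnm : D - 1 ∉ Dset := by
        rw [hD]
        exact Nat.notMem_of_lt_sInf (by omega)
      rw [hDset, Set.mem_setOf_eq, not_and] at hnm
      have hnm2 := hnm (by omega)
      push_neg at hnm2
      obtain ⟨T, hTc, hT⟩ := hnm2
      exact ⟨T, hTc, hT⟩
  obtain ⟨U, hUc, hUp⟩ := hU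
  -- Upper bound: D + (k - 1) ∈ Iset
  have hupper : D + (k - 1) ∈ Iset := by
    refine ⟨by omega, fun T hT => ?_⟩
    set T1 := T.filter (fun x => ¬ IsUnit x) with hT1
    set T2 := T.filter (fun x => IsUnit x) with hT2
    by_cases hc : k ≤ Multiset.card T1
    · obtain ⟨W, hWle, hWc⟩ := aux_exists_sub_card T1 hc
      have hW0 : W ≠ 0 := by
        intro h; rw [h, Multiset.card_zero] at hWc; omega
      have hmul : ∀ x ∈ W, ∃ y, x = ((p : ℕ) : ZMod (p ^ k)) * y := by
        intro x hx
        have hxT1 : x ∈ T1 := Multiset.mem_of_le hWle hx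
        rw [hT1] at hxT1
        have hnx : ¬ IsUnit x := (Multiset.mem_filter.1 hxT1).2
        exact aux_nonunit_p_mul hp hk hnx
      obtain ⟨z, hz⟩ := aux_prod_factor _ W hmul
      have hprod : W.prod = 0 := by
        rw [hz, hWc]
        have hpk : ((p : ℕ) : ZMod (p ^ k)) ^ k = 0 := by
          rw [← Nat.cast_pow, ZMod.natCast_self]
        rw [hpk, zero_mul]
      exact ⟨W, hWle.trans (Multiset.filter_le _ T), hW0, by rw [hprod, mul_zero]⟩
    · have hsplit : Multiset.card T2 + Multiset.card T1 = Multiset.card T := by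
        rw [hT1, hT2, ← Multiset.card_add, Multiset.filter_add_not]
      have hT2c : D ≤ Multiset.card T2 := by omega
      obtain ⟨S, hSle, hSc⟩ := aux_exists_sub_card T2 hT2c
      have hSu : ∀ x ∈ S, IsUnit x := by
        intro x hx
        have hxT2 : x ∈ T2 := Multiset.mem_of_le hSle hx
        rw [hT2] at hxT2
        exact (Multiset.mem_filter.1 hxT2).2
      obtain ⟨V, hV⟩ := aux_lift_units S hSu
      obtain ⟨Wu, h1, h2, h3⟩ := hDmem.2 V (by rw [← Multiset.card_map Units.val, hV, hSc])
      refine ⟨Wu.map Units.val, ?_, ?_, ?_⟩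
      · have hmle : Wu.map Units.val ≤ V.map Units.val := Multiset.map_le_map h1
        rw [hV] at hmle
        exact hmle.trans (hSle.trans (Multiset.filter_le _ T))
      · intro h
        apply h2
        rwa [← Multiset.card_eq_zero, Multiset.card_map, Multiset.card_eq_zero] at h
      · rw [aux_val_prod, h3]
        simp
  -- Lower bound: the extremal multiset T₀
  have hlowT : ∀ W, W ≤ Multiset.replicate (k - 1) ((p : ℕ) : ZMod (p ^ k)) +
      U.map Units.val → W ≠ 0 → ¬ (W.prod * W.prod = W.prod) := by
    intro W hWle hW0 hidem
    set W1 := W.filter (fun x => ¬ IsUnit x) with hW1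
    set W2 := W.filter (fun x => IsUnit x) with hW2
    set T₀ := Multiset.replicate (k - 1) ((p : ℕ) : ZMod (p ^ k)) + U.map Units.val with hT₀
    have hfilt1 : T₀.filter (fun x => ¬ IsUnit x) =
        Multiset.replicate (k - 1) ((p : ℕ) : ZMod (p ^ k)) := by
      rw [hT₀, Multiset.filter_add]
      have e1 : (Multiset.replicate (k - 1) ((p : ℕ) : ZMod (p ^ k))).filter
          (fun x => ¬ IsUnit x) = Multiset.replicate (k - 1) ((p : ℕ) : ZMod (p ^ k)) :=
        Multiset.filter_eq_self.2 (fun a ha => by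
          rw [Multiset.eq_of_mem_replicate ha]; exact aux_p_not_unit hp hk)
      have e2 : (U.map Units.val).filter (fun x => ¬ IsUnit x) = 0 :=
        Multiset.filter_eq_nil.2 (fun a ha => by
          obtain ⟨u, _, rfl⟩ := Multiset.mem_map.1 ha
          simp)
      rw [e1, e2, add_zero]
    have hfilt2 : T₀.filter (fun x => IsUnit x) = U.map Units.val := by
      rw [hT₀, Multiset.filter_add]
      have e1 : (Multiset.replicate (k - 1) ((p : ℕ) : ZMod (p ^ k))).filter
          (fun x => IsUnit x) = 0 :=
        Multiset.filter_eq_nil.2 (fun a ha => by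
          rw [Multiset.eq_of_mem_replicate ha]; exact aux_p_not_unit hp hk)
      have e2 : (U.map Units.val).filter (fun x => IsUnit x) = U.map Units.val :=
        Multiset.filter_eq_self.2 (fun a ha => by
          obtain ⟨u, _, rfl⟩ := Multiset.mem_map.1 ha
          simp)
      rw [e1, e2, zero_add]
    have hW1le : W1 ≤ Multiset.replicate (k - 1) ((p : ℕ) : ZMod (p ^ k)) := by
      rw [hW1, ← hfilt1]; exact Multiset.filter_le_filter _ hWle
    have hW2le : W2 ≤ U.map Units.val := by
      rw [hW2, ← hfilt2]; exact Multiset.filter_le_filter _ hWle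
    set j := Multiset.card W1 with hj
    have hjk : j ≤ k - 1 := by
      have hcc := Multiset.card_le_card hW1le
      rwa [Multiset.card_replicate] at hcc
    have hW1rep : W1 = Multiset.replicate j ((p : ℕ) : ZMod (p ^ k)) :=
      Multiset.eq_replicate_card.2 (fun b hb =>
        Multiset.eq_of_mem_replicate (Multiset.mem_of_le hW1le hb))
    obtain ⟨V, hV⟩ := aux_lift_units W2 (by
      intro x hx
      rw [hW2] at hx
      exact (Multiset.mem_filter.1 hx).2)
    have hVU : V ≤ U := by
      rw [← Multiset.map_le_map_iff Units.val_injective, hV]; exact hW2le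
    have hWsum : W2 + W1 = W := Multiset.filter_add_not _ W
    have hWprod : W.prod = ((V.prod : (ZMod (p ^ k))ˣ) : ZMod (p ^ k)) *
        ((p : ℕ) : ZMod (p ^ k)) ^ j := by
      rw [← hWsum, Multiset.prod_add, hW1rep, Multiset.prod_replicate, ← hV, aux_val_prod]
    rcases aux_idem hp hk hidem with h0 | h1
    · rw [hWprod] at h0
      have hpj : ((p : ℕ) : ZMod (p ^ k)) ^ j = 0 :=
        ((V.prod).isUnit.mul_right_eq_zero).1 h0
      exact aux_pow_p_ne_zero hp (by omega) hpj
    · -- W.prod = 1 : everything must be a unit, so j = 0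
      have hunit : IsUnit (W.prod) := h1 ▸ isUnit_one
      have hj0 : j = 0 := by
        by_contra hj0
        have hppow : IsUnit (((p : ℕ) : ZMod (p ^ k)) ^ j) := by
          rw [hWprod] at hunit
          exact isUnit_of_mul_isUnit_right hunit
        have hpu : IsUnit ((p : ℕ) : ZMod (p ^ k)) := by
          rcases Nat.exists_eq_succ_of_ne_zero hj0 with ⟨m, hm⟩
          rw [hm, pow_succ] at hppow
          exact isUnit_of_mul_isUnit_right hppow
        exact aux_p_not_unit hp hk hpu
      rw [hWprod, hj0, pow_zero, mul_one] at h1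
      have hV1 : V.prod = 1 := Units.ext h1
      have hV0 : V ≠ 0 := by
        intro h
        apply hW0
        rw [← hWsum, ← hV, h, hW1rep, hj0]
        simp
      exact hUp V hVU hV0 hV1
  -- conclude
  have hT₀card : Multiset.card (Multiset.replicate (k - 1) ((p : ℕ) : ZMod (p ^ k)) +
      U.map Units.val) = (k - 1) + (D - 1) := by
    rw [Multiset.card_add, Multiset.card_replicate, Multiset.card_map, hUc]
  have hIne : Iset.Nonempty := ⟨_, hupper⟩
  have hImem : sInf Iset ∈ Iset := Nat.sInf_mem hIne
  have hge : D + k - 1 ≤ sInf Iset := by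
    by_contra hcon
    push_neg at hcon
    have hle : sInf Iset ≤ (k - 1) + (D - 1) := by omega
    obtain ⟨W, h1, h2, h3⟩ := aux_upclosed (P := fun x => x * x = x) hle hImem.2 _ hT₀card
    exact hlowT W h1 h2 h3
  have hle : sInf Iset ≤ D + k - 1 := by
    have hsle := Nat.sInf_le hupper
    omega
  omega
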